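/- Let a = (1 n; 0 1) and b = (1 0; −n 1) in SL₂(ℤ) with n ≥ 2. Then the subgroup of SL₂(ℤ) generated by a and b is free of rank 2. -/

import Mathlib

open Matrix Pointwise

abbrev SL2Z := Matrix.SpecialLinearGroup (Fin 2) ℤ

instance sl2smul : SMul SL2Z (Fin 2 → ℤ) := ⟨fun g v => g.1.mulVec v⟩

lemma sl2smul_def (g : SL2Z) (v : Fin 2 → ℤ) : g • v = g.1.mulVec v := rfl

instance sl2act : MulAction SL2Z (Fin 2 → ℤ) where
  one_smul v := by simp [sl2smul_def]
  mul_smul g h v := by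
    simp only [sl2smul_def, Matrix.SpecialLinearGroup.coe_mul, Matrix.mulVec_mulVec]

lemma keyabs (n k x y : ℤ) (hn : 2 ≤ n) (hk : k ≠ 0) (h : |x| < |y|) :
    |y| < |x + k * n * y| := by
  have h1 : 1 ≤ |k| := Int.one_le_abs hk
  have h2 : |k * n * y| = |k| * n * |y| := by
    rw [abs_mul, abs_mul, abs_of_nonneg (by omega : (0:ℤ) ≤ n)]
  have h3 : |k * n * y| ≤ |x + k * n * y| + |x| := by
    calc |k * n * y| = |(x + k * n * y) + (-x)| := by ring_nf
      _ ≤ |x + k * n * y| + |-x| := abs_add_le _ _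
      _ = |x + k * n * y| + |x| := by rw [abs_neg]
  have h5 : 0 ≤ |y| := abs_nonneg y
  have h6 : 2 ≤ |k| * n := by nlinarith
  have h7 : 2 * |y| ≤ |k| * n * |y| := mul_le_mul_of_nonneg_right h6 h5
  linarith

lemma pow_coe (n : ℤ) (A : SL2Z) (hA : A.1 = !![1, n; 0, 1]) (k : ℤ) :
    ((A ^ k : SL2Z) : Matrix (Fin 2) (Fin 2) ℤ) = !![1, k * n; 0, 1] := by
  have hAinv : ((A⁻¹ : SL2Z) : Matrix (Fin 2) (Fin 2) ℤ) = !![1, -n; 0, 1] := by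
    rw [Matrix.SpecialLinearGroup.coe_inv, hA, Matrix.adjugate_fin_two]
    norm_num
  induction k using Int.induction_on with
  | zero => simp [Matrix.SpecialLinearGroup.coe_one, Matrix.one_fin_two]
  | succ k ih =>
    rw [_root_.zpow_add_one, Matrix.SpecialLinearGroup.coe_mul, ih, hA]
    rw [Matrix.mul_fin_two]
    norm_num; ring
  | pred k ih =>
    rw [_root_.zpow_sub_one, Matrix.SpecialLinearGroup.coe_mul, ih, hAinv]
    rw [Matrix.mul_fin_two]
    norm_num; ring

lemma pow_coe' (n : ℤ) (B : SL2Z) (hB : B.1 = !![1, 0; -n, 1]) (k : ℤ) :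
    ((B ^ k : SL2Z) : Matrix (Fin 2) (Fin 2) ℤ) = !![1, 0; -(k * n), 1] := by
  have hBinv : ((B⁻¹ : SL2Z) : Matrix (Fin 2) (Fin 2) ℤ) = !![1, 0; n, 1] := by
    rw [Matrix.SpecialLinearGroup.coe_inv, hB, Matrix.adjugate_fin_two]
    norm_num
  induction k using Int.induction_on with
  | zero => simp [Matrix.SpecialLinearGroup.coe_one, Matrix.one_fin_two]
  | succ k ih =>
    rw [_root_.zpow_add_one, Matrix.SpecialLinearGroup.coe_mul, ih, hB, Matrix.mul_fin_two]
    norm_num; ring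
  | pred k ih =>
    rw [_root_.zpow_sub_one, Matrix.SpecialLinearGroup.coe_mul, ih, hBinv, Matrix.mul_fin_two]
    norm_num; ring

lemma smul_eqA (n : ℤ) (A : SL2Z) (hA : A.1 = !![1, n; 0, 1]) (k : ℤ) (v : Fin 2 → ℤ) :
    (A ^ k) • v = ![v 0 + k * n * v 1, v 1] := by
  funext i
  fin_cases i <;>
    simp [sl2smul_def, pow_coe n A hA k, Matrix.mulVec, dotProduct,
      Fin.sum_univ_two]

lemma smul_eqB (n : ℤ) (B : SL2Z) (hB : B.1 = !![1, 0; -n, 1]) (k : ℤ) (v : Fin 2 → ℤ) :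
    (B ^ k) • v = ![v 0, v 1 + (-k) * n * v 0] := by
  funext i
  fin_cases i <;>
    simp [sl2smul_def, pow_coe' n B hB k, Matrix.mulVec, dotProduct,
      Fin.sum_univ_two] <;> ring

theorem free_group_in_SL2 (n : ℤ) (hn : 2 ≤ n)
    (A B : Matrix.SpecialLinearGroup (Fin 2) ℤ)
    (hA : (A : Matrix (Fin 2) (Fin 2) ℤ) = !![1, n; 0, 1])
    (hB : (B : Matrix (Fin 2) (Fin 2) ℤ) = !![1, 0; -n, 1]) :
    Function.Injective (FreeGroup.lift (fun x : Bool => if x then A else B) :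
      FreeGroup Bool →* Matrix.SpecialLinearGroup (Fin 2) ℤ) := by
  have key : (FreeGroup.lift (fun x : Bool => if x then A else B) :
      FreeGroup Bool →* SL2Z) =
      (Monoid.CoprodI.lift fun i : Bool =>
        (FreeGroup.lift fun _ : Unit => if i then A else B : FreeGroup Unit →* SL2Z)).comp
        (@freeGroupEquivCoprodI Bool).toMonoidHom := by
    ext i
    simp
  rw [key, MonoidHom.coe_comp]
  refine Function.Injective.comp ?_ (MulEquiv.injective freeGroupEquivCoprodI)
  set X : Bool → Set (Fin 2 → ℤ) :=
    fun i => if i then {v | |v 1| < |v 0|} else {v | |v 0| < |v 1|} with hXdef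
  apply Monoid.CoprodI.lift_injective_of_ping_pong _ _ X
  · intro i
    cases i
    · exact ⟨![0, 1], by simp [hXdef]⟩
    · exact ⟨![1, 0], by simp [hXdef]⟩
  · intro i j hij
    simp only [Function.onFun]
    rw [Set.disjoint_left]
    intro v h1 h2
    rw [hXdef] at h1 h2
    cases i <;> cases j
    · exact hij rfl
    · simp only [Bool.false_eq_true, if_false, if_true, Set.mem_setOf_eq] at h1 h2; omega
    · simp only [Bool.false_eq_true, if_false, if_true, Set.mem_setOf_eq] at h1 h2; omega
    · exact hij rfl
  · rintro i j hij
    refine FreeGroup.freeGroupUnitEquivInt.forall_congr_left.mpr ?_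
    intro k hne1
    change FreeGroup.lift (fun _ => if i then A else B) (FreeGroup.of () ^ k) • X j ⊆ X i
    simp only [map_zpow, FreeGroup.lift_apply_of]
    have hk : k ≠ 0 := by
      rintro rfl
      exact hne1 (by simp [FreeGroup.freeGroupUnitEquivInt])
    rintro _ ⟨v, hv, rfl⟩
    rw [hXdef] at hv
    cases i <;> cases j
    · exact absurd rfl hij
    · -- i = false (B), j = true
      simp only [Bool.false_eq_true, if_false, if_true, Set.mem_setOf_eq, reduceIte] at hv ⊢
      rw [smul_eqB n B hB k v, hXdef]
      simp only [Bool.false_eq_true, if_false, Set.mem_setOf_eq]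
      simpa using keyabs n (-k) (v 1) (v 0) hn (by omega) hv
    · -- i = true (A), j = false
      simp only [Bool.false_eq_true, if_false, if_true, Set.mem_setOf_eq, reduceIte] at hv ⊢
      rw [smul_eqA n A hA k v, hXdef]
      simp only [if_true, Set.mem_setOf_eq]
      simpa using keyabs n k (v 0) (v 1) hn hk hv
    · exact absurd rfl hij
  · right
    refine ⟨true, ?_⟩
    rw [FreeGroup.freeGroupUnitEquivInt.cardinal_eq, Cardinal.mk_denumerable]
    exact_mod_cast (Cardinal.nat_lt_aleph0 3).le
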